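/- Let H be a nontrivial connected graph containing a cycle C and let w ∈ V(C) have degree 2 in H. Let F be the subdivided star S_s(K_{1,s+t}) with s ≥ 2, t ≥ 0, obtained from the star K_{1,s+t} by subdividing s of its edges exactly once, and let G be obtained from H and F by identifying w with the center of F. Set G' = G − V(F). Then γ₂(G) ≤ γ₂(G') + s + t + 1 and a(G) ≥ a(G') + s + t + 1; consequently γ₂(G') ≤ a(G') + 1 implies γ₂(G) ≤ a(G) + 1. -/

import Mathlib

open Classical Finset
noncomputable section

/-- `S` is a 2-dominating set of `G`: every vertex outside `S` has ≥ 2 neighbors in `S`. -/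
def IsTwoDomSet {V : Type*} [Fintype V] (G : SimpleGraph V) (S : Finset V) : Prop :=
  ∀ v, v ∉ S → 2 ≤ (G.neighborFinset v ∩ S).card

/-- The 2-domination number. -/
noncomputable def gamma2 {V : Type*} [Fintype V] (G : SimpleGraph V) : ℕ :=
  sInf {k | ∃ S : Finset V, IsTwoDomSet G S ∧ S.card = k}

/-- `S` is an annihilation set of `G`: the sum of degrees over `S` is at most `m(G)`. -/
def IsAnnSet {V : Type*} [Fintype V] (G : SimpleGraph V) (S : Finset V) : Prop :=
  ∑ v ∈ S, G.degree v ≤ G.edgeFinset.card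

/-- The annihilation number: the largest size of an annihilation set (equivalently, the
largest `k` such that the sum of the `k` smallest degrees is at most the edge count). -/
noncomputable def annihilation {V : Type*} [Fintype V] (G : SimpleGraph V) : ℕ :=
  sSup {k | ∃ S : Finset V, IsAnnSet G S ∧ S.card = k}

/-- The graph obtained from `H` by identifying the vertex `w` with the center of the
subdivided star `S_s(K_{1,s+t})`: `Sum.inr (Sum.inl (Sum.inl i))` are the `s` middle
vertices adjacent to `w`, `Sum.inr (Sum.inl (Sum.inr i))` their pendant leaves, and
`Sum.inr (Sum.inr j)` the `t` leaves adjacent to `w`. -/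
def graftStar {V : Type*} (H : SimpleGraph V) (w : V) (s t : ℕ) :
    SimpleGraph (V ⊕ ((Fin s ⊕ Fin s) ⊕ Fin t)) :=
  SimpleGraph.fromRel (fun a b =>
    match a, b with
    | Sum.inl x, Sum.inl y => H.Adj x y
    | Sum.inl x, Sum.inr (Sum.inl (Sum.inl _)) => x = w
    | Sum.inl x, Sum.inr (Sum.inr _) => x = w
    | Sum.inr (Sum.inl (Sum.inl i)), Sum.inr (Sum.inl (Sum.inr i')) => i = i'
    | _, _ => False)

section adj
variable {V : Type*} (H : SimpleGraph V) (w : V) (s t : ℕ)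

@[simp] lemma graft_adj_inl_inl (x y : V) :
    (graftStar H w s t).Adj (Sum.inl x) (Sum.inl y) ↔ H.Adj x y := by
  simp only [graftStar, SimpleGraph.fromRel_adj]
  constructor
  · rintro ⟨h, h1 | h2⟩
    · exact h1
    · exact h2.symm
  · intro h; exact ⟨fun e => H.irrefl (Sum.inl.inj e ▸ h), Or.inl h⟩

@[simp] lemma graft_adj_inl_mid (x : V) (i : Fin s) :
    (graftStar H w s t).Adj (Sum.inl x) (Sum.inr (Sum.inl (Sum.inl i))) ↔ x = w := by
  simp [graftStar, SimpleGraph.fromRel_adj]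

@[simp] lemma graft_adj_mid_inl (x : V) (i : Fin s) :
    (graftStar H w s t).Adj (Sum.inr (Sum.inl (Sum.inl i))) (Sum.inl x) ↔ x = w := by
  simp [graftStar, SimpleGraph.fromRel_adj]

@[simp] lemma graft_adj_inl_pend (x : V) (i : Fin s) :
    ¬ (graftStar H w s t).Adj (Sum.inl x) (Sum.inr (Sum.inl (Sum.inr i))) := by
  simp [graftStar, SimpleGraph.fromRel_adj]

@[simp] lemma graft_adj_pend_inl (x : V) (i : Fin s) :
    ¬ (graftStar H w s t).Adj (Sum.inr (Sum.inl (Sum.inr i))) (Sum.inl x) := by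
  simp [graftStar, SimpleGraph.fromRel_adj]

@[simp] lemma graft_adj_inl_tleaf (x : V) (j : Fin t) :
    (graftStar H w s t).Adj (Sum.inl x) (Sum.inr (Sum.inr j)) ↔ x = w := by
  simp [graftStar, SimpleGraph.fromRel_adj]

@[simp] lemma graft_adj_tleaf_inl (x : V) (j : Fin t) :
    (graftStar H w s t).Adj (Sum.inr (Sum.inr j)) (Sum.inl x) ↔ x = w := by
  simp [graftStar, SimpleGraph.fromRel_adj]

@[simp] lemma graft_adj_mid_pend (i i' : Fin s) :
    (graftStar H w s t).Adj (Sum.inr (Sum.inl (Sum.inl i))) (Sum.inr (Sum.inl (Sum.inr i'))) ↔ i = i' := by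
  simp [graftStar, SimpleGraph.fromRel_adj]

@[simp] lemma graft_adj_pend_mid (i i' : Fin s) :
    (graftStar H w s t).Adj (Sum.inr (Sum.inl (Sum.inr i))) (Sum.inr (Sum.inl (Sum.inl i'))) ↔ i' = i := by
  simp [graftStar, SimpleGraph.fromRel_adj]

@[simp] lemma graft_adj_mid_mid (i i' : Fin s) :
    ¬ (graftStar H w s t).Adj (Sum.inr (Sum.inl (Sum.inl i))) (Sum.inr (Sum.inl (Sum.inl i'))) := by
  simp [graftStar, SimpleGraph.fromRel_adj]

@[simp] lemma graft_adj_pend_pend (i i' : Fin s) :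
    ¬ (graftStar H w s t).Adj (Sum.inr (Sum.inl (Sum.inr i))) (Sum.inr (Sum.inl (Sum.inr i'))) := by
  simp [graftStar, SimpleGraph.fromRel_adj]

@[simp] lemma graft_adj_mid_tleaf (i : Fin s) (j : Fin t) :
    ¬ (graftStar H w s t).Adj (Sum.inr (Sum.inl (Sum.inl i))) (Sum.inr (Sum.inr j)) := by
  simp [graftStar, SimpleGraph.fromRel_adj]

@[simp] lemma graft_adj_tleaf_mid (i : Fin s) (j : Fin t) :
    ¬ (graftStar H w s t).Adj (Sum.inr (Sum.inr j)) (Sum.inr (Sum.inl (Sum.inl i))) := by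
  simp [graftStar, SimpleGraph.fromRel_adj]

@[simp] lemma graft_adj_pend_tleaf (i : Fin s) (j : Fin t) :
    ¬ (graftStar H w s t).Adj (Sum.inr (Sum.inl (Sum.inr i))) (Sum.inr (Sum.inr j)) := by
  simp [graftStar, SimpleGraph.fromRel_adj]

@[simp] lemma graft_adj_tleaf_pend (i : Fin s) (j : Fin t) :
    ¬ (graftStar H w s t).Adj (Sum.inr (Sum.inr j)) (Sum.inr (Sum.inl (Sum.inr i))) := by
  simp [graftStar, SimpleGraph.fromRel_adj]

@[simp] lemma graft_adj_tleaf_tleaf (j j' : Fin t) :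
    ¬ (graftStar H w s t).Adj (Sum.inr (Sum.inr j)) (Sum.inr (Sum.inr j')) := by
  simp [graftStar, SimpleGraph.fromRel_adj]

end adj

section deg
variable {V : Type*} [Fintype V] (H : SimpleGraph V) (w : V) (s t : ℕ)

lemma degree_eq_sum {α : Type*} [Fintype α] (G : SimpleGraph α) [DecidableRel G.Adj] (v : α) :
    G.degree v = ∑ u, if G.Adj v u then 1 else 0 := by
  rw [← SimpleGraph.card_neighborFinset_eq_degree, SimpleGraph.neighborFinset_eq_filter,
    Finset.card_filter]

lemma graft_degree_inl (x : V) :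
    (graftStar H w s t).degree (Sum.inl x) = H.degree x + (if x = w then s + t else 0) := by
  rw [degree_eq_sum, Fintype.sum_sum_type, Fintype.sum_sum_type, Fintype.sum_sum_type]
  have h1 : ∑ y : V, (if (graftStar H w s t).Adj (Sum.inl x) (Sum.inl y) then 1 else 0)
      = H.degree x := by
    rw [degree_eq_sum]
    exact Finset.sum_congr rfl fun y _ => by simp
  rw [h1]
  by_cases hx : x = w <;> simp [hx, Finset.sum_ite_eq]

lemma graft_degree_mid (i : Fin s) :
    (graftStar H w s t).degree (Sum.inr (Sum.inl (Sum.inl i))) = 2 := by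
  rw [degree_eq_sum, Fintype.sum_sum_type, Fintype.sum_sum_type, Fintype.sum_sum_type]
  simp [Finset.sum_ite_eq, Finset.sum_ite_eq']

lemma graft_degree_pend (i : Fin s) :
    (graftStar H w s t).degree (Sum.inr (Sum.inl (Sum.inr i))) = 1 := by
  rw [degree_eq_sum, Fintype.sum_sum_type, Fintype.sum_sum_type, Fintype.sum_sum_type]
  simp [Finset.sum_ite_eq, Finset.sum_ite_eq']

lemma graft_degree_tleaf (j : Fin t) :
    (graftStar H w s t).degree (Sum.inr (Sum.inr j)) = 1 := by
  rw [degree_eq_sum, Fintype.sum_sum_type, Fintype.sum_sum_type, Fintype.sum_sum_type]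
  simp [Finset.sum_ite_eq, Finset.sum_ite_eq']

lemma sum_subtype_ne (f : V → ℕ) :
    ∑ y : ↥{x : V | x ≠ w}, f ↑y = ∑ y ∈ ({w}ᶜ : Finset V), f y :=
  (Finset.sum_subtype _ (by simp) f).symm

lemma induced_degree (a : ↥{x : V | x ≠ w}) :
    (H.induce {x : V | x ≠ w}).degree a + (if H.Adj ↑a w then 1 else 0) = H.degree ↑a := by
  rw [degree_eq_sum, degree_eq_sum]
  have : ∑ b : ↥{x : V | x ≠ w},
      (if (H.induce {x : V | x ≠ w}).Adj a b then 1 else 0)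
      = ∑ b : ↥{x : V | x ≠ w}, (if H.Adj ↑a ↑b then 1 else 0) :=
    Finset.sum_congr rfl fun b _ => by simp [SimpleGraph.comap_adj]
  rw [this, sum_subtype_ne w (fun y => if H.Adj ↑a y then 1 else 0)]
  rw [← Finset.sum_compl_add_sum ({w} : Finset V) (fun y => if H.Adj ↑a y then 1 else 0),
    Finset.sum_singleton]

lemma sum_adj_w : ∑ y : ↥{x : V | x ≠ w}, (if H.Adj ↑y w then 1 else 0) = H.degree w := by
  rw [sum_subtype_ne w (fun y => if H.Adj y w then 1 else 0), degree_eq_sum,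
    ← Finset.sum_compl_add_sum ({w} : Finset V) (fun y => if H.Adj w y then 1 else 0),
    Finset.sum_singleton]
  simp only [SimpleGraph.irrefl, if_false, add_zero]
  exact Finset.sum_congr rfl fun y _ => by simp [SimpleGraph.adj_comm]

lemma graft_edge_card :
    2 * #(graftStar H w s t).edgeFinset = 2 * #H.edgeFinset + 4 * s + 2 * t := by
  rw [← SimpleGraph.sum_degrees_eq_twice_card_edges, ← SimpleGraph.sum_degrees_eq_twice_card_edges,
    Fintype.sum_sum_type, Fintype.sum_sum_type, Fintype.sum_sum_type]
  simp only [graft_degree_inl, graft_degree_mid, graft_degree_pend, graft_degree_tleaf,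
    Finset.sum_add_distrib, Finset.sum_ite_eq, Finset.mem_univ, if_true, Finset.sum_const,
    Finset.card_univ, Fintype.card_fin, smul_eq_mul]
  rw [Finset.sum_ite_eq' Finset.univ w fun _ => s + t]
  simp
  omega

lemma induced_edge_card (hdw : H.degree w = 2) :
    2 * #(H.induce {x : V | x ≠ w}).edgeFinset + 4 = 2 * #H.edgeFinset := by
  rw [← SimpleGraph.sum_degrees_eq_twice_card_edges, ← SimpleGraph.sum_degrees_eq_twice_card_edges]
  have h1 : ∑ a : ↥{x : V | x ≠ w}, ((H.induce {x : V | x ≠ w}).degree a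
      + (if H.Adj ↑a w then 1 else 0)) = ∑ a : ↥{x : V | x ≠ w}, H.degree ↑a :=
    Finset.sum_congr rfl fun a _ => induced_degree H w a
  have h2 : ∑ a : ↥{x : V | x ≠ w}, H.degree ↑a = (∑ y : V, H.degree y) - H.degree w := by
    rw [sum_subtype_ne w (fun y => H.degree y)]
    have e2 := Finset.sum_compl_add_sum ({w} : Finset V) (fun y => H.degree y)
    rw [Finset.sum_singleton] at e2
    omega
  have h3 := sum_adj_w H w
  have h4 : ∑ y : ↥{x : V | x ≠ w}, (if H.Adj ↑y w then 1 else 0)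
      = ∑ y : ↥{x : V | x ≠ w}, (if H.Adj (↑y : V) w then 1 else 0) := rfl
  rw [Finset.sum_add_distrib] at h1
  have hle : H.degree w ≤ ∑ y : V, H.degree y :=
    Finset.single_le_sum (f := fun y => H.degree y) (fun _ _ => Nat.zero_le _) (Finset.mem_univ w)
  omega
end deg


/-- Lemma 3.5: removing a subdivided star `S_s(K_{1,s+t})` (s ≥ 2) whose center is a
degree-2 vertex `w` on a cycle of `H`. Here `G' = G − V(F)` is `H` minus `w`. -/
theorem stmt7 {V : Type*} [Fintype V] (H : SimpleGraph V) (hH : H.Connected)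
    (hnontriv : 2 ≤ Fintype.card V) (w : V)
    (hcyc : ∃ (c : H.Walk w w), c.IsCycle) (hdw : H.degree w = 2)
    (s t : ℕ) (hs : 2 ≤ s) :
    gamma2 (graftStar H w s t) ≤ gamma2 (H.induce {x : V | x ≠ w}) + s + t + 1 ∧
    annihilation (H.induce {x : V | x ≠ w}) + s + t + 1 ≤ annihilation (graftStar H w s t) ∧
    (gamma2 (H.induce {x : V | x ≠ w}) ≤ annihilation (H.induce {x : V | x ≠ w}) + 1 →
      gamma2 (graftStar H w s t) ≤ annihilation (graftStar H w s t) + 1) := by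
  -- Part 1
  have hne1 : {k | ∃ S : Finset ↥{x : V | x ≠ w}, IsTwoDomSet (H.induce {x : V | x ≠ w}) S ∧ S.card = k}.Nonempty :=
    ⟨_, Finset.univ, fun v hv => absurd (Finset.mem_univ v) hv, rfl⟩
  obtain ⟨S', hS', hcS⟩ := Nat.sInf_mem hne1
  have part1 : gamma2 (graftStar H w s t) ≤ gamma2 (H.induce {x : V | x ≠ w}) + s + t + 1 := by
    set B0 : Finset (V ⊕ ((Fin s ⊕ Fin s) ⊕ Fin t)) :=
      S'.image (fun a => Sum.inl a.1) with hB0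
    set B1 : Finset (V ⊕ ((Fin s ⊕ Fin s) ⊕ Fin t)) :=
      Finset.univ.image (fun i : Fin s => Sum.inr (Sum.inl (Sum.inr i))) with hB1
    set B2 : Finset (V ⊕ ((Fin s ⊕ Fin s) ⊕ Fin t)) :=
      Finset.univ.image (fun j : Fin t => Sum.inr (Sum.inr j)) with hB2
    set S : Finset (V ⊕ ((Fin s ⊕ Fin s) ⊕ Fin t)) :=
      ((B0 ∪ {Sum.inl w}) ∪ B1) ∪ B2 with hSdef
    have hwS : (Sum.inl w : V ⊕ ((Fin s ⊕ Fin s) ⊕ Fin t)) ∈ S := by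
      simp [hSdef]
    have hpendS : ∀ i : Fin s, (Sum.inr (Sum.inl (Sum.inr i)) :
        V ⊕ ((Fin s ⊕ Fin s) ⊕ Fin t)) ∈ S := by
      intro i; simp [hSdef, hB1]
    have htleafS : ∀ j : Fin t, (Sum.inr (Sum.inr j) :
        V ⊕ ((Fin s ⊕ Fin s) ⊕ Fin t)) ∈ S := by
      intro j; simp [hSdef, hB2]
    have hS'S : ∀ a ∈ S', (Sum.inl a.1 : V ⊕ ((Fin s ⊕ Fin s) ⊕ Fin t)) ∈ S := by
      intro a ha
      simp only [hSdef, Finset.mem_union]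
      exact Or.inl (Or.inl (Or.inl (Finset.mem_image_of_mem _ ha)))
    have hdom : IsTwoDomSet (graftStar H w s t) S := by
      rintro (x | ⟨i | i⟩ | j) hv
      · by_cases hx : x = w
        · subst hx; exact absurd hwS hv
        · have hx' : (⟨x, hx⟩ : ↥{x : V | x ≠ w}) ∉ S' := fun h => hv (hS'S ⟨x, hx⟩ h)
          refine le_trans (hS' ⟨x, hx⟩ hx')
            (Finset.card_le_card_of_injOn (fun b => Sum.inl b.1) ?_ ?_)
          · intro b hb
            simp only [Finset.mem_coe, Finset.mem_inter, SimpleGraph.mem_neighborFinset] at hb ⊢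
            refine ⟨?_, hS'S b hb.2⟩
            have h1 := hb.1
            simp only [SimpleGraph.comap_adj, Function.Embedding.coe_subtype] at h1
            simpa using h1
          · intro b _ c _ h
            exact Subtype.ext (Sum.inl.inj h)
      · -- middle vertex
        refine Finset.one_lt_card.2
          ⟨Sum.inl w, ?_, Sum.inr (Sum.inl (Sum.inr i)), ?_, by simp⟩
        · simp only [Finset.mem_inter]
          exact ⟨by simp, hwS⟩
        · simp only [Finset.mem_inter]
          exact ⟨by simp, hpendS i⟩
      · exact absurd (hpendS i) hv
      · exact absurd (htleafS j) hv
    have hle1 : gamma2 (graftStar H w s t) ≤ S.card := Nat.sInf_le ⟨S, hdom, rfl⟩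
    have hle2 : S.card ≤ S'.card + 1 + s + t := by
      have h0 : B0.card ≤ S'.card := Finset.card_image_le
      have h1 : B1.card ≤ s := le_trans Finset.card_image_le (by simp)
      have h2 : B2.card ≤ t := le_trans Finset.card_image_le (by simp)
      have u1 := Finset.card_union_le (B0 ∪ {Sum.inl w} ∪ B1) B2
      have u2 := Finset.card_union_le (B0 ∪ {Sum.inl w}) B1
      have u3 := Finset.card_union_le B0 ({Sum.inl w} :
        Finset (V ⊕ ((Fin s ⊕ Fin s) ⊕ Fin t)))
      rw [Finset.card_singleton] at u3
      rw [hSdef]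
      omega
    have hcS' : S'.card = gamma2 (H.induce {x : V | x ≠ w}) := hcS
    omega
  -- Part 2
  have hbddG : BddAbove {k | ∃ S : Finset (V ⊕ ((Fin s ⊕ Fin s) ⊕ Fin t)),
      IsAnnSet (graftStar H w s t) S ∧ S.card = k} := by
    refine ⟨Fintype.card (V ⊕ ((Fin s ⊕ Fin s) ⊕ Fin t)), ?_⟩
    rintro k ⟨S, _, rfl⟩
    exact Finset.card_le_univ S
  have hbddG' : BddAbove {k | ∃ S : Finset ↥{x : V | x ≠ w}, IsAnnSet (H.induce {x : V | x ≠ w}) S ∧ S.card = k} := by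
    refine ⟨Fintype.card ↥{x : V | x ≠ w}, ?_⟩
    rintro k ⟨S, _, rfl⟩
    exact Finset.card_le_univ S
  have hne2 : {k | ∃ S : Finset ↥{x : V | x ≠ w}, IsAnnSet (H.induce {x : V | x ≠ w}) S ∧ S.card = k}.Nonempty :=
    ⟨0, ∅, by simp [IsAnnSet], rfl⟩
  obtain ⟨A', hA', hcA⟩ := Nat.sSup_mem hne2 hbddG'
  have hcA' : A'.card = annihilation (H.induce {x : V | x ≠ w}) := hcA
  have part2 : annihilation (H.induce {x : V | x ≠ w}) + s + t + 1 ≤ annihilation (graftStar H w s t) := by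
    have hs0 : (0 : ℕ) < s := by omega
    set m0 : V ⊕ ((Fin s ⊕ Fin s) ⊕ Fin t) := Sum.inr (Sum.inl (Sum.inl ⟨0, hs0⟩)) with hm0
    set B0 : Finset (V ⊕ ((Fin s ⊕ Fin s) ⊕ Fin t)) :=
      A'.image (fun a => Sum.inl a.1) with hB0
    set B1 : Finset (V ⊕ ((Fin s ⊕ Fin s) ⊕ Fin t)) :=
      Finset.univ.image (fun i : Fin s => Sum.inr (Sum.inl (Sum.inr i))) with hB1
    set B2 : Finset (V ⊕ ((Fin s ⊕ Fin s) ⊕ Fin t)) :=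
      Finset.univ.image (fun j : Fin t => Sum.inr (Sum.inr j)) with hB2
    have d01 : Disjoint B0 B1 := by
      simp [hB0, hB1, Finset.disjoint_left]
    have d012 : Disjoint (B0 ∪ B1) B2 := by
      simp [hB0, hB1, hB2, Finset.disjoint_left]
    have d3 : Disjoint ((B0 ∪ B1) ∪ B2) {m0} := by
      simp [hB0, hB1, hB2, hm0, Finset.disjoint_left]
    set A : Finset (V ⊕ ((Fin s ⊕ Fin s) ⊕ Fin t)) := ((B0 ∪ B1) ∪ B2) ∪ {m0} with hA
    have hinj0 : Function.Injective (fun a : ↥{x : V | x ≠ w} =>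
        (Sum.inl a.1 : V ⊕ ((Fin s ⊕ Fin s) ⊕ Fin t))) :=
      fun a b h => Subtype.ext (Sum.inl.inj h)
    have hinj1 : Function.Injective (fun i : Fin s => Sum.inr (Sum.inl (Sum.inr i)) :
        Fin s → V ⊕ ((Fin s ⊕ Fin s) ⊕ Fin t)) := fun a b h => by simpa using h
    have hinj2 : Function.Injective (fun j : Fin t => Sum.inr (Sum.inr j) :
        Fin t → V ⊕ ((Fin s ⊕ Fin s) ⊕ Fin t)) := fun a b h => by simpa using h
    have hcard : A.card = A'.card + s + t + 1 := by
      rw [hA, Finset.card_union_of_disjoint d3, Finset.card_union_of_disjoint d012,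
        Finset.card_union_of_disjoint d01, hB0, hB1, hB2,
        Finset.card_image_of_injective _ hinj0, Finset.card_image_of_injective _ hinj1,
        Finset.card_image_of_injective _ hinj2]
      simp
    have hannA : IsAnnSet (graftStar H w s t) A := by
      unfold IsAnnSet
      rw [hA, Finset.sum_union d3, Finset.sum_union d012, Finset.sum_union d01,
        hB0, hB1, hB2, Finset.sum_image (fun a _ b _ h => hinj0 h),
        Finset.sum_image (fun a _ b _ h => hinj1 h),
        Finset.sum_image (fun a _ b _ h => hinj2 h), Finset.sum_singleton]
      have e1 : ∑ i : Fin s, (graftStar H w s t).degree (Sum.inr (Sum.inl (Sum.inr i))) = s := by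
        simp [graft_degree_pend]
      have e2 : ∑ j : Fin t, (graftStar H w s t).degree (Sum.inr (Sum.inr j)) = t := by
        simp [graft_degree_tleaf]
      have e3 : (graftStar H w s t).degree m0 = 2 := graft_degree_mid H w s t _
      have e0 : ∑ a ∈ A', (graftStar H w s t).degree (Sum.inl a.1) ≤ (∑ a ∈ A', (H.induce {x : V | x ≠ w}).degree a) + 2 := by
        have estep : ∀ a ∈ A', (graftStar H w s t).degree (Sum.inl a.1)
            = (H.induce {x : V | x ≠ w}).degree a + (if H.Adj ↑a w then 1 else 0) := by
          intro a _
          rw [graft_degree_inl, if_neg a.2, add_zero]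
          exact (induced_degree H w a).symm
        rw [Finset.sum_congr rfl estep, Finset.sum_add_distrib]
        have : ∑ a ∈ A', (if H.Adj ↑a w then 1 else 0)
            ≤ ∑ a : ↥{x : V | x ≠ w}, (if H.Adj ↑a w then 1 else 0) :=
          Finset.sum_le_sum_of_subset (Finset.subset_univ A')
        rw [sum_adj_w H w, hdw] at this
        omega
      have hedgeG := graft_edge_card H w s t
      have hedgeG' := induced_edge_card H w hdw
      have hA'sum : ∑ a ∈ A', (H.induce {x : V | x ≠ w}).degree a ≤ #(H.induce {x : V | x ≠ w}).edgeFinset := hA'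
      omega
    have hfin : A.card ≤ annihilation (graftStar H w s t) := le_csSup hbddG ⟨A, hannA, rfl⟩
    omega
  refine ⟨part1, part2, fun h => by omega⟩
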